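/- For the RWM acceptance log-ratio τ_γ(x,z) = U(x + √(2γ)z) - U(x) with ∇U L-Lipschitz, define ζ_γ(x,z) = 1 - min(1, e^{-τ_γ(x,z)}) - (√(2γ)⟨∇U(x), z⟩)₊. Then for all γ > 0 and x, z ∈ ℝ^d: |ζ_γ(x,z)| ≤ γ‖z‖² (L + 2‖∇U(x)‖² + 4γL²‖z‖²). -/

import Mathlib

open MeasureTheory Real
open scoped BigOperators RealInnerProductSpace

noncomputable section

abbrev Euc (d : ℕ) := EuclideanSpace ℝ (Fin d)

/-- Laplacian via the second iterated Fréchet derivative in coordinate directions. -/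
def lapl {d : ℕ} (φ : Euc d → ℝ) (x : Euc d) : ℝ :=
  ∑ i : Fin d, iteratedFDeriv ℝ 2 φ x ![EuclideanSpace.single i 1, EuclideanSpace.single i 1]

/-- The Langevin generator `L φ = -⟨∇U, ∇φ⟩ + Δφ`. -/
def gen {d : ℕ} (U φ : Euc d → ℝ) (x : Euc d) : ℝ :=
  - ⟪gradient U x, gradient φ x⟫ + lapl φ x

/-- The Gibbs probability measure `π(dx) ∝ e^{-U(x)} dx`. -/
def gibbs {d : ℕ} (U : Euc d → ℝ) : Measure (Euc d) :=
  ((∫⁻ x, ENNReal.ofReal (Real.exp (-U x)))⁻¹) •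
    ((volume : Measure (Euc d)).withDensity fun x => ENNReal.ofReal (Real.exp (-U x)))

/-- Polynomial growth of the `k`-th derivative. -/
def PolyGrowthD {d : ℕ} (k : ℕ) (f : Euc d → ℝ) : Prop :=
  ∃ (C : ℝ) (p : ℕ), ∀ x, ‖iteratedFDeriv ℝ k f x‖ ≤ C * (1 + ‖x‖) ^ p


lemma taylor_bound {d : ℕ} (U : Euc d → ℝ) (L : ℝ) (hL : 0 ≤ L)
    (hdiff : Differentiable ℝ U)
    (hLip : ∀ x y, ‖gradient U x - gradient U y‖ ≤ L * ‖x - y‖)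
    (x v : Euc d) :
    |U (x + v) - U x - ⟪gradient U x, v⟫| ≤ L / 2 * ‖v‖ ^ 2 := by
  have hg : ∀ t : ℝ, HasDerivAt (fun t : ℝ => U (x + t • v))
      ⟪gradient U (x + t • v), v⟫ t := by
    intro t
    have hline : HasDerivAt (fun t : ℝ => x + t • v) v t := by
      simpa using ((hasDerivAt_id t).smul_const v).const_add x
    have := ((hdiff (x + t • v)).hasFDerivAt).comp_hasDerivAt t hline
    refine this.congr_deriv ?_
    simp [gradient, InnerProductSpace.toDual_symm_apply]
  have key : ∀ ε : ℝ, |ε| = 1 →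
      ε * (U (x + v) - U x - ⟪gradient U x, v⟫) ≤ L / 2 * ‖v‖ ^ 2 := by
    intro ε hε
    set F : ℝ → ℝ := fun t => L / 2 * ‖v‖ ^ 2 * t ^ 2
      - ε * (U (x + t • v) - t * ⟪gradient U x, v⟫) with hF
    have hF' : ∀ t : ℝ, HasDerivAt F
        (L * ‖v‖ ^ 2 * t - ε * (⟪gradient U (x + t • v), v⟫ - ⟪gradient U x, v⟫)) t := by
      intro t
      have h1 : HasDerivAt (fun t : ℝ => L / 2 * ‖v‖ ^ 2 * t ^ 2) (L * ‖v‖ ^ 2 * t) t := by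
        have := (hasDerivAt_pow 2 t).const_mul (L / 2 * ‖v‖ ^ 2)
        exact this.congr_deriv (by norm_num; ring)
      have h2 : HasDerivAt (fun t : ℝ => U (x + t • v) - t * ⟪gradient U x, v⟫)
          (⟪gradient U (x + t • v), v⟫ - ⟪gradient U x, v⟫) t := by
        exact ((hg t).sub ((hasDerivAt_id t).mul_const _)).congr_deriv (by simp)
      exact h1.sub (h2.const_mul ε)
    have hmono : MonotoneOn F (Set.Icc (0:ℝ) 1) := by
      apply monotoneOn_of_deriv_nonneg (convex_Icc 0 1)
      · exact (Differentiable.continuous (fun t => (hF' t).differentiableAt)).continuousOn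
      · exact fun t _ => ((hF' t).differentiableAt).differentiableWithinAt
      · intro t ht
        rw [interior_Icc] at ht
        rw [(hF' t).deriv]
        have hb : ε * (⟪gradient U (x + t • v), v⟫ - ⟪gradient U x, v⟫)
            ≤ L * ‖v‖ ^ 2 * t := by
          have h3 : ⟪gradient U (x + t • v), v⟫ - ⟪gradient U x, v⟫
              = ⟪gradient U (x + t • v) - gradient U x, v⟫ := by
            rw [inner_sub_left]
          calc ε * (⟪gradient U (x + t • v), v⟫ - ⟪gradient U x, v⟫)
              ≤ |ε * (⟪gradient U (x + t • v), v⟫ - ⟪gradient U x, v⟫)| := le_abs_self _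
            _ = |⟪gradient U (x + t • v) - gradient U x, v⟫| := by
                rw [abs_mul, hε, one_mul, h3]
            _ ≤ ‖gradient U (x + t • v) - gradient U x‖ * ‖v‖ :=
                abs_real_inner_le_norm _ _
            _ ≤ (L * ‖(x + t • v) - x‖) * ‖v‖ := by
                gcongr; exact hLip _ _
            _ = L * ‖v‖ ^ 2 * t := by
                simp [norm_smul, abs_of_pos ht.1]
                ring
        linarith
    have h01 := hmono (Set.left_mem_Icc.2 zero_le_one) (Set.right_mem_Icc.2 zero_le_one)
      zero_le_one
    simp only [hF] at h01
    have e0 : x + (0:ℝ) • v = x := by simp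
    have e1 : x + (1:ℝ) • v = x + v := by simp
    rw [e0, e1] at h01
    nlinarith [h01]
  rw [abs_le]
  constructor
  · have := key (-1) (by norm_num); linarith
  · have := key 1 (by norm_num); linarith

lemma exp_neg_le (a : ℝ) (ha : 0 ≤ a) : Real.exp (-a) ≤ 1 - a + a ^ 2 / 2 := by
  set F : ℝ → ℝ := fun t => 1 - t + t ^ 2 / 2 - Real.exp (-t) with hF
  have hF' : ∀ t : ℝ, HasDerivAt F (-1 + t + Real.exp (-t)) t := by
    intro t
    have h1 : HasDerivAt (fun t : ℝ => 1 - t + t ^ 2 / 2) (-1 + t) t := by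
      have := ((hasDerivAt_id t).const_sub 1).add ((hasDerivAt_pow 2 t).div_const 2)
      exact this.congr_deriv (by norm_num)
    have h2 : HasDerivAt (fun t : ℝ => Real.exp (-t)) (-Real.exp (-t)) t := by
      exact ((Real.hasDerivAt_exp (-t)).comp t ((hasDerivAt_id t).neg)).congr_deriv (by simp)
    exact (h1.sub h2).congr_deriv (by ring)
  have hmono : MonotoneOn F (Set.Icc (0:ℝ) a) := by
    apply monotoneOn_of_deriv_nonneg (convex_Icc 0 a)
    · exact (Differentiable.continuous (fun t => (hF' t).differentiableAt)).continuousOn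
    · exact fun t _ => ((hF' t).differentiableAt).differentiableWithinAt
    · intro t ht
      rw [interior_Icc] at ht
      rw [(hF' t).deriv]
      have : 1 - t ≤ Real.exp (-t) := by
        have := Real.add_one_le_exp (-t); linarith
      linarith
  have := hmono (Set.left_mem_Icc.2 ha) (Set.right_mem_Icc.2 ha) ha
  simp only [hF] at this
  simp at this
  linarith [this]


set_option maxHeartbeats 1000000 in
theorem stmt_12 {d : ℕ} (U : Euc d → ℝ) (L : ℝ) (hL : 0 ≤ L)
    (hdiff : Differentiable ℝ U)
    (hLip : ∀ x y, ‖gradient U x - gradient U y‖ ≤ L * ‖x - y‖)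
    (γ : ℝ) (hγ : 0 < γ) (x z : Euc d) :
    |1 - min 1 (Real.exp (-(U (x + Real.sqrt (2*γ) • z) - U x)))
       - max (Real.sqrt (2*γ) * ⟪gradient U x, z⟫) 0|
      ≤ γ * ‖z‖ ^ 2 * (L + 2 * ‖gradient U x‖ ^ 2 + 4 * γ * L ^ 2 * ‖z‖ ^ 2) := by
  set g := gradient U x with hg
  set τ := U (x + Real.sqrt (2*γ) • z) - U x with hτ
  set s := Real.sqrt (2*γ) * ⟪g, z⟫ with hs
  have h2γ : (0:ℝ) ≤ 2 * γ := by linarith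
  have hsq : Real.sqrt (2*γ) ^ 2 = 2*γ := Real.sq_sqrt h2γ
  have hsqrt0 : 0 ≤ Real.sqrt (2*γ) := Real.sqrt_nonneg _
  have hnv : ‖Real.sqrt (2*γ) • z‖ ^ 2 = 2 * γ * ‖z‖ ^ 2 := by
    rw [norm_smul, Real.norm_eq_abs, abs_of_nonneg hsqrt0, mul_pow, hsq]
  have htaylor : |τ - s| ≤ L * γ * ‖z‖ ^ 2 := by
    have := taylor_bound U L hL hdiff hLip x (Real.sqrt (2*γ) • z)
    rw [real_inner_smul_right, hnv] at this
    calc |τ - s| ≤ L / 2 * (2 * γ * ‖z‖ ^ 2) := this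
      _ = L * γ * ‖z‖ ^ 2 := by ring
  set a := max τ 0 with ha
  set b := max s 0 with hb
  have ha0 : 0 ≤ a := le_max_right _ _
  have hb0 : 0 ≤ b := le_max_right _ _
  have hmin : min 1 (Real.exp (-τ)) = Real.exp (-a) := by
    rcases le_total τ 0 with h | h
    · have haa : a = 0 := max_eq_right h
      rw [haa, min_eq_left]
      · simp
      · rw [← Real.exp_zero]; exact Real.exp_le_exp.2 (by linarith)
    · have haa : a = τ := max_eq_left h
      rw [haa, min_eq_right]
      rw [← Real.exp_zero]; exact Real.exp_le_exp.2 (by linarith)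
  have hab : |a - b| ≤ L * γ * ‖z‖ ^ 2 :=
    (abs_max_sub_max_le_abs τ s 0).trans htaylor
  have hbb : b ^ 2 ≤ 2 * γ * ‖g‖ ^ 2 * ‖z‖ ^ 2 := by
    have h1 : b ≤ |s| := max_le (le_abs_self s) (abs_nonneg s)
    have h2 : |s| ≤ Real.sqrt (2*γ) * (‖g‖ * ‖z‖) := by
      rw [hs, abs_mul, abs_of_nonneg hsqrt0]
      exact mul_le_mul_of_nonneg_left (abs_real_inner_le_norm g z) hsqrt0
    have h4 := pow_le_pow_left₀ hb0 (h1.trans h2) 2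
    rw [mul_pow, hsq, mul_pow] at h4
    nlinarith [h4]
  clear_value a b
  clear_value τ s g
  have hub : 1 - Real.exp (-a) ≤ a := by
    have := Real.add_one_le_exp (-a); linarith
  have hlb : a - a ^ 2 / 2 ≤ 1 - Real.exp (-a) := by
    have := exp_neg_le a ha0; linarith
  rw [hmin]
  rw [abs_le]
  have hKz : 0 ≤ L * γ * ‖z‖ ^ 2 := by positivity
  have haub : a ≤ b + L * γ * ‖z‖ ^ 2 := by
    have := abs_le.1 hab; linarith [this.2]
  set K := L * γ * ‖z‖ ^ 2 with hK
  clear_value K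
  have habs := abs_le.1 hab
  have hKsq : K ^ 2 ≤ 4 * γ ^ 2 * L ^ 2 * ‖z‖ ^ 4 := by
    subst hK; nlinarith [sq_nonneg (L * γ * ‖z‖ ^ 2), hγ.le, sq_nonneg ‖z‖, sq_nonneg L]
  have ha2 : a ^ 2 ≤ 2 * b ^ 2 + 2 * K ^ 2 := by nlinarith [sq_nonneg (b - K)]
  constructor
  · have hζ : -(K + b ^ 2 + K ^ 2) ≤ 1 - Real.exp (-a) - b := by nlinarith
    have hfin : K + b ^ 2 + K ^ 2
        ≤ γ * ‖z‖ ^ 2 * (L + 2 * ‖g‖ ^ 2 + 4 * γ * L ^ 2 * ‖z‖ ^ 2) := by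
      subst hK; nlinarith [hbb, hKsq, hγ.le, sq_nonneg ‖z‖, sq_nonneg ‖g‖]
    linarith
  · have hζ : 1 - Real.exp (-a) - b ≤ K := by linarith
    have hfin : K ≤ γ * ‖z‖ ^ 2 * (L + 2 * ‖g‖ ^ 2 + 4 * γ * L ^ 2 * ‖z‖ ^ 2) := by
      subst hK; nlinarith [hγ.le, sq_nonneg ‖z‖, sq_nonneg ‖g‖, sq_nonneg (L * ‖z‖ ^ 2), hL]
    linarith
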